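/- arXiv:1210.6071 — 2 statements merged into one kernel-verified Lean document; each statement's English description precedes it below -/
import Mathlib

section
/- For f in the Schwartz space on ℝⁿ and a unit vector u ∈ Sⁿ⁻¹, the Euclidean Fourier transform of f evaluated at ru (r ∈ ℝ) equals, up to the standard normalizing constant, the one-dimensional Fourier transform in s of the hyperplane Radon transform ŝ ↦ ∫_{⟨x,u⟩=s} f(x) dx; i.e. 𝓕f(ru) = c ∫_ℝ (∫_{⟨x,u⟩=s} f dσ) e^{-isr} ds (Fourier slice theorem). -/
open MeasureTheory Complex
open scoped RealInnerProductSpace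

/-- The hyperplane Radon transform: the integral of `f` over the affine hyperplane
`{x : ⟪x, u⟫ = s}` (with unit normal `u` and distance parameter `s`), with respect to
Lebesgue measure on that hyperplane, parametrized by the orthogonal complement of `u`. -/
noncomputable def radonTransform {n : ℕ} (f : EuclideanSpace ℝ (Fin n) → ℂ)
    (u : EuclideanSpace ℝ (Fin n)) (s : ℝ) : ℂ :=
  ∫ v : ((ℝ ∙ u)ᗮ : Submodule ℝ (EuclideanSpace ℝ (Fin n))), f (s • u + (v : EuclideanSpace ℝ (Fin n)))

/-- The Euclidean Fourier transform with the convention `𝓕f(ξ) = ∫ f(x) e^{-i⟪x,ξ⟫} dx`. -/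
noncomputable def euclideanFourier {n : ℕ} (f : EuclideanSpace ℝ (Fin n) → ℂ)
    (ξ : EuclideanSpace ℝ (Fin n)) : ℂ :=
  ∫ x : EuclideanSpace ℝ (Fin n), f x * Complex.exp (-(Complex.I * (⟪x, ξ⟫ : ℝ)))

open Module

section Aux
variable {n : ℕ} (u : EuclideanSpace ℝ (Fin n))

local notation "OC" => ((ℝ ∙ u)ᗮ : Submodule ℝ (EuclideanSpace ℝ (Fin n)))

noncomputable def bK := stdOrthonormalBasis ℝ ((ℝ ∙ u)ᗮ : Submodule ℝ (EuclideanSpace ℝ (Fin n)))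

noncomputable def famE : Fin 1 ⊕ Fin (finrank ℝ OC) → EuclideanSpace ℝ (Fin n) :=
  Sum.elim (fun _ => u) (fun j => (bK u j : EuclideanSpace ℝ (Fin n)))

lemma inner_of_memK {w : EuclideanSpace ℝ (Fin n)} (hw : w ∈ OC) : ⟪u, w⟫ = 0 :=
  hw u (Submodule.mem_span_singleton_self u)

lemma famE_orthonormal (hu : ‖u‖ = 1) : Orthonormal ℝ (famE u) := by
  rw [orthonormal_iff_ite]
  rintro (i | i) (j | j)
  · simp only [famE, Sum.elim_inl]
    rw [real_inner_self_eq_norm_sq, hu]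
    simp [Subsingleton.elim i j]
  · simp only [famE, Sum.elim_inl, Sum.elim_inr]
    rw [inner_of_memK u (bK u j).2]
    simp
  · simp only [famE, Sum.elim_inl, Sum.elim_inr]
    rw [real_inner_comm, inner_of_memK u (bK u i).2]
    simp
  · simp only [famE, Sum.elim_inr]
    have := (bK u).orthonormal
    rw [orthonormal_iff_ite] at this
    have h := this i j
    rw [Submodule.coe_inner] at h
    rw [h]
    simp [Sum.inr.injEq]

lemma famE_span : ⊤ ≤ Submodule.span ℝ (Set.range (famE u)) := by
  have hrange : Set.range (famE u)
      = Set.range (fun _ : Fin 1 => u) ∪ (Subtype.val '' Set.range (bK u)) := by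
    rw [famE, Set.Sum.elim_range]
    congr 1
    ext x; simp [Set.mem_image, Set.mem_range]
  have h2 := (bK u).toBasis.span_eq
  rw [OrthonormalBasis.coe_toBasis] at h2
  have h1 : Submodule.span ℝ (Subtype.val '' Set.range (bK u)) = OC := by
    have : (Subtype.val '' Set.range (bK u))
        = ((OC).subtype '' Set.range (bK u)) := rfl
    rw [this, Submodule.span_image, h2, Submodule.map_top, Submodule.range_subtype]
  have hr1 : Set.range (fun _ : Fin 1 => u) = {u} := by
    ext x; simp [eq_comm]
  have hsup := (Submodule.isCompl_orthogonal
    (Submodule.span ℝ {u} : Submodule ℝ (EuclideanSpace ℝ (Fin n)))).sup_eq_top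
  rw [hrange, Submodule.span_union, h1, hr1, hsup]

end Aux

section G
variable {n : ℕ} (u : EuclideanSpace ℝ (Fin n)) (hu : ‖u‖ = 1)
local notation "OC" => ((ℝ ∙ u)ᗮ : Submodule ℝ (EuclideanSpace ℝ (Fin n)))

noncomputable def bE (hu : ‖u‖ = 1) :
    OrthonormalBasis (Fin 1 ⊕ Fin (finrank ℝ OC)) ℝ (EuclideanSpace ℝ (Fin n)) :=
  OrthonormalBasis.mk (famE_orthonormal u hu) (famE_span u)

noncomputable def Gequiv (hu : ‖u‖ = 1) : (ℝ × OC) ≃ᵐ EuclideanSpace ℝ (Fin n) :=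
  (MeasurableEquiv.prodCongr (MeasurableEquiv.funUnique (Fin 1) ℝ).symm
      ((bK u).measurableEquiv.trans (MeasurableEquiv.toLp 2 (Fin (finrank ℝ OC) → ℝ)).symm)).trans
    (((MeasurableEquiv.sumPiEquivProdPi (fun _ : Fin 1 ⊕ Fin (finrank ℝ OC) => ℝ)).symm).trans
      ((MeasurableEquiv.toLp 2 (Fin 1 ⊕ Fin (finrank ℝ OC) → ℝ)).trans
        (bE u hu).measurableEquiv.symm))

lemma Gequiv_measurePreserving :
    MeasurePreserving (Gequiv u hu) (volume.prod volume) volume := by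
  have h1 : MeasurePreserving (MeasurableEquiv.prodCongr (MeasurableEquiv.funUnique (Fin 1) ℝ).symm
      ((bK u).measurableEquiv.trans (MeasurableEquiv.toLp 2 (Fin (finrank ℝ OC) → ℝ)).symm))
      (volume.prod volume) (volume.prod volume) :=
    ((volume_preserving_funUnique (Fin 1) ℝ).symm _).prod
      ((EuclideanSpace.volume_preserving_symm_measurableEquiv_toLp _).comp ((bK u).measurePreserving_measurableEquiv))
  have h2 := volume_measurePreserving_sumPiEquivProdPi_symm (fun _ : Fin 1 ⊕ Fin (finrank ℝ OC) => ℝ)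
  have h3 := (EuclideanSpace.volume_preserving_symm_measurableEquiv_toLp (Fin 1 ⊕ Fin (finrank ℝ OC))).symm
  have h4 := ((bE u hu).measurePreserving_measurableEquiv).symm
  exact (((h4.comp h3).comp h2).comp h1)

lemma Gequiv_apply (s : ℝ) (w : OC) :
    Gequiv u hu (s, w) = s • u + (w : EuclideanSpace ℝ (Fin n)) := by
  show (bE u hu).repr.symm (WithLp.toLp 2 (fun i => Sum.elim (fun _ : Fin 1 => s) (fun j => (bK u).repr w j) i) :
      EuclideanSpace ℝ (Fin 1 ⊕ Fin (finrank ℝ OC))) = _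
  rw [← OrthonormalBasis.sum_repr_symm, Fintype.sum_sum_type]
  have hb : ∀ i, bE u hu i = famE u i := fun i => congrFun (OrthonormalBasis.coe_mk _ _) i
  simp only [hb, famE, Sum.elim_inl, Sum.elim_inr]
  congr 1
  · simp
  · have : ∀ j, (bK u).repr w j • ((bK u j : EuclideanSpace ℝ (Fin n)))
        = (((bK u).repr w j • bK u j : OC) : EuclideanSpace ℝ (Fin n)) := fun j => rfl
    simp only [this]
    rw [← Submodule.coe_sum]
    congr 1
    exact (bK u).sum_repr w

end G

/-- **Fourier slice theorem**: for a Schwartz function `f` on `ℝⁿ` and a unit vector `u`,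
the Fourier transform of `f` at `r • u` equals the one-dimensional Fourier transform in `s`
of the hyperplane Radon transform `s ↦ f̂(u, s)`, with constant `c = 1`. -/
theorem fourier_slice {n : ℕ} (f : SchwartzMap (EuclideanSpace ℝ (Fin n)) ℂ)
    (u : EuclideanSpace ℝ (Fin n)) (hu : ‖u‖ = 1) (r : ℝ) :
    euclideanFourier (fun x => f x) (r • u) =
      ∫ s : ℝ, radonTransform (fun x => f x) u s * Complex.exp (-(Complex.I * s * r)) := by
  classical
  set F : EuclideanSpace ℝ (Fin n) → ℂ :=
    fun x => f x * Complex.exp (-(Complex.I * (⟪x, r • u⟫ : ℝ))) with hF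
  have hcont : Continuous fun x : EuclideanSpace ℝ (Fin n) =>
      Complex.exp (-(Complex.I * (⟪x, r • u⟫ : ℝ))) := by
    have h0 : Continuous fun x : EuclideanSpace ℝ (Fin n) => (⟪x, r • u⟫ : ℝ) :=
      continuous_id.inner continuous_const
    exact Complex.continuous_exp.comp
      ((continuous_const.mul (Complex.continuous_ofReal.comp h0)).neg)
  have hbdd : ∀ x : EuclideanSpace ℝ (Fin n),
      ‖Complex.exp (-(Complex.I * (⟪x, r • u⟫ : ℝ)))‖ ≤ 1 := by
    intro x
    rw [Complex.norm_exp]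
    simp
  have hFint : Integrable F volume := by
    have h2 : Integrable (fun x : EuclideanSpace ℝ (Fin n) =>
        Complex.exp (-(Complex.I * (⟪x, r • u⟫ : ℝ))) * f x) volume :=
      (f.integrable).bdd_mul hcont.aestronglyMeasurable (Filter.Eventually.of_forall hbdd)
    simpa [hF, mul_comm] using h2
  have hG := Gequiv_measurePreserving u hu
  have hemb := (Gequiv u hu).measurableEmbedding
  have key : euclideanFourier (fun x => f x) (r • u)
      = ∫ p : ℝ × ((ℝ ∙ u)ᗮ : Submodule ℝ (EuclideanSpace ℝ (Fin n))),
          F (Gequiv u hu p) ∂(volume.prod volume) :=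
    (hG.integral_comp hemb F).symm
  have hFG : Integrable (fun p => F (Gequiv u hu p)) (volume.prod volume) :=
    (hG.integrable_comp_emb hemb).2 hFint
  rw [key, MeasureTheory.integral_prod _ hFG]
  congr 1
  funext s
  have hptwise : ∀ w : ((ℝ ∙ u)ᗮ : Submodule ℝ (EuclideanSpace ℝ (Fin n))),
      F (Gequiv u hu (s, w)) = f (s • u + (w : EuclideanSpace ℝ (Fin n)))
        * Complex.exp (-(Complex.I * s * r)) := by
    intro w
    simp only [hF, Gequiv_apply u hu s w]
    congr 1
    have hinner : ⟪s • u + (w : EuclideanSpace ℝ (Fin n)), r • u⟫ = s * r := by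
      rw [real_inner_smul_right, inner_add_left, real_inner_smul_left,
        real_inner_self_eq_norm_sq, hu, real_inner_comm, inner_of_memK u w.2]
      ring
    rw [hinner]
    push_cast
    ring_nf
  simp_rw [hptwise]
  rw [MeasureTheory.integral_mul_const]
  rfl
end

section
/- If f : ℝⁿ → ℂ is a Schwartz function such that ∫_{ℝⁿ} f(x) p(x) dx = 0 for every polynomial p, then for every unit vector u and every polynomial q in one variable, ∫_ℝ f̂(u,s) q(s) ds = 0, where f̂ is the hyperplane Radon transform. -/
open MeasureTheory

noncomputable def onb {m : ℕ} (u : EuclideanSpace ℝ (Fin (m+1))) (hu : ‖u‖ = 1)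
    (c : OrthonormalBasis (Fin m) ℝ ((ℝ ∙ u)ᗮ : Submodule ℝ (EuclideanSpace ℝ (Fin (m+1))))) :
    OrthonormalBasis (Fin (m+1)) ℝ (EuclideanSpace ℝ (Fin (m+1))) := by
  refine OrthonormalBasis.mk (v := Fin.cons u fun j => (c j : EuclideanSpace ℝ (Fin (m+1)))) ?_ ?_
  · rw [orthonormal_iff_ite]
    intro i j
    refine Fin.cases ?_ ?_ i <;> [skip; intro i'] <;> refine Fin.cases ?_ ?_ j <;>
      try intro j'
    · rw [Fin.cons_zero, if_pos rfl, real_inner_self_eq_norm_sq, hu]; norm_num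
    · simp only [Fin.cons_zero, Fin.cons_succ]
      rw [if_neg (by simp [Fin.ext_iff])]
      exact ((c j').2 u (Submodule.mem_span_singleton_self u))
    · simp only [Fin.cons_zero, Fin.cons_succ]
      rw [if_neg (by simp [Fin.ext_iff])]
      rw [real_inner_comm]
      exact ((c i').2 u (Submodule.mem_span_singleton_self u))
    · simp only [Fin.cons_succ]
      have := orthonormal_iff_ite.mp c.orthonormal i' j'
      rw [Submodule.coe_inner] at this
      simpa [Fin.succ_inj] using this
  · rw [top_le_iff, ← Submodule.orthogonal_eq_bot_iff]
    rw [Submodule.eq_bot_iff]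
    intro x hx
    have h1 : x ∈ (ℝ ∙ u)ᗮ := by
      intro w hw
      rw [Submodule.mem_span_singleton] at hw
      obtain ⟨a, rfl⟩ := hw
      rw [inner_smul_left]
      have := hx u (Submodule.subset_span ⟨0, by simp⟩)
      simp [this]
    -- x ∈ K and x ⟂ every c j, and c spans K
    have h2 : (⟨x, h1⟩ : ((ℝ ∙ u)ᗮ : Submodule ℝ (EuclideanSpace ℝ (Fin (m+1))))) = 0 := by
      have hrepr : c.repr ⟨x, h1⟩ = 0 := by
        ext j
        rw [c.repr_apply_apply]
        rw [Submodule.coe_inner]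
        have := hx (c j : EuclideanSpace ℝ (Fin (m+1)))
          (Submodule.subset_span ⟨j.succ, by simp⟩)
        simpa using this
      have := congrArg c.repr.symm hrepr
      simpa using this
    simpa using congrArg Subtype.val h2

lemma finrank_orth {m : ℕ} (u : EuclideanSpace ℝ (Fin (m+1))) (hu : ‖u‖ = 1) :
    Module.finrank ℝ ((ℝ ∙ u)ᗮ : Submodule ℝ (EuclideanSpace ℝ (Fin (m+1)))) = m := by
  have hu0 : u ≠ 0 := by intro h; rw [h] at hu; simp at hu
  have h1 : Module.finrank ℝ (ℝ ∙ u : Submodule ℝ (EuclideanSpace ℝ (Fin (m+1)))) = 1 :=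
    finrank_span_singleton hu0
  have h2 := Submodule.finrank_add_finrank_orthogonal
    (K := (ℝ ∙ u : Submodule ℝ (EuclideanSpace ℝ (Fin (m+1)))))
  rw [h1, finrank_euclideanSpace_fin] at h2
  omega

lemma exists_mp {m : ℕ} (u : EuclideanSpace ℝ (Fin (m+1))) (hu : ‖u‖ = 1) :
    ∃ Φ : (ℝ × (((ℝ ∙ u)ᗮ : Submodule ℝ (EuclideanSpace ℝ (Fin (m+1)))))) ≃ᵐ
        EuclideanSpace ℝ (Fin (m+1)),
      MeasurePreserving Φ ∧
      ∀ p : ℝ × (((ℝ ∙ u)ᗮ : Submodule ℝ (EuclideanSpace ℝ (Fin (m+1))))),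
        Φ p = p.1 • u + (p.2 : EuclideanSpace ℝ (Fin (m+1))) := by
  set K := ((ℝ ∙ u)ᗮ : Submodule ℝ (EuclideanSpace ℝ (Fin (m+1)))) with hK
  let c : OrthonormalBasis (Fin m) ℝ K :=
    (stdOrthonormalBasis ℝ K).reindex (finCongr (finrank_orth u hu))
  let B := onb u hu c
  let Φ : (ℝ × K) ≃ᵐ EuclideanSpace ℝ (Fin (m+1)) :=
    ((MeasurableEquiv.refl ℝ).prodCongr c.measurableEquiv).trans <|
      ((MeasurableEquiv.refl ℝ).prodCongr ((MeasurableEquiv.toLp 2 (Fin m → ℝ)).symm)).trans <|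
        ((MeasurableEquiv.piFinSuccAbove (fun _ : Fin (m+1) => ℝ) 0).symm).trans <|
          (MeasurableEquiv.toLp 2 (Fin (m+1) → ℝ)).trans
            B.measurableEquiv.symm
  refine ⟨Φ, ?_, ?_⟩
  · have h1 : MeasurePreserving ((MeasurableEquiv.refl ℝ).prodCongr c.measurableEquiv)
        (volume : Measure (ℝ × K)) volume :=
      (MeasurePreserving.id volume).prod c.measurePreserving_measurableEquiv
    have h2 : MeasurePreserving
        ((MeasurableEquiv.refl ℝ).prodCongr ((MeasurableEquiv.toLp 2 (Fin m → ℝ)).symm)) :=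
      (MeasurePreserving.id volume).prod (EuclideanSpace.volume_preserving_symm_measurableEquiv_toLp (Fin m))
    have h3 : MeasurePreserving ((MeasurableEquiv.piFinSuccAbove (fun _ : Fin (m+1) => ℝ) 0).symm) :=
      (volume_preserving_piFinSuccAbove (fun _ : Fin (m+1) => ℝ) 0).symm
    have h4 := (EuclideanSpace.volume_preserving_symm_measurableEquiv_toLp (Fin (m+1))).symm
    have h5 := B.measurePreserving_measurableEquiv.symm
    exact h5.comp (h4.comp (h3.comp (h2.comp h1)))
  · rintro ⟨s, v⟩
    apply B.repr.injective
    ext i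
    have hL : B.repr (Φ (s, v)) i =
        Fin.insertNth (α := fun _ : Fin (m+1) => ℝ) 0 s (fun j => c.repr v j) i := by
      simp [Φ, OrthonormalBasis.measurableEquiv, MeasurableEquiv.piFinSuccAbove]
      rfl
    rw [hL]
    have hBrep : ∀ x, B.repr x i = inner ℝ (B i) x := fun x => B.repr_apply_apply x i
    rw [hBrep]
    have hBi : B i = Fin.cons (α := fun _ : Fin (m+1) => EuclideanSpace ℝ (Fin (m+1))) u (fun j => (c j : EuclideanSpace ℝ (Fin (m+1)))) i := by
      simp [B, onb]
    rw [hBi]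
    have huv : (inner ℝ u (v : EuclideanSpace ℝ (Fin (m+1))) : ℝ) = 0 := v.2 u (Submodule.mem_span_singleton_self u)
    refine Fin.cases ?_ ?_ i
    · rw [Fin.insertNth_zero, Fin.cons_zero, Fin.cons_zero, inner_add_right, inner_smul_right,
        real_inner_self_eq_norm_sq, hu, huv]
      ring
    · intro j
      rw [Fin.insertNth_zero, Fin.cons_succ, Fin.cons_succ, inner_add_right, inner_smul_right]
      have h1 : (inner ℝ ((c j : EuclideanSpace ℝ (Fin (m+1)))) u : ℝ) = 0 := by
        rw [real_inner_comm]
        exact (c j).2 u (Submodule.mem_span_singleton_self u)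
      have h2 : (inner ℝ ((c j : EuclideanSpace ℝ (Fin (m+1)))) (v : EuclideanSpace ℝ (Fin (m+1))) : ℝ) = c.repr v j := by
        rw [← Submodule.coe_inner, ← c.repr_apply_apply]
      rw [h1, h2]
      simp

lemma integrable_aux {n : ℕ} (f : SchwartzMap (EuclideanSpace ℝ (Fin n)) ℂ)
    (u : EuclideanSpace ℝ (Fin n)) (hu : ‖u‖ = 1) (q : Polynomial ℝ) :
    Integrable (fun x : EuclideanSpace ℝ (Fin n) =>
      f x * ((q.eval (inner ℝ x u : ℝ) : ℝ) : ℂ)) := by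
  induction q using Polynomial.induction_on' with
  | add p r hp hr =>
    simpa [mul_add, Pi.add_def] using hp.add hr
  | monomial k a =>
    have hint : Integrable (fun x : EuclideanSpace ℝ (Fin n) => |a| * (‖x‖ ^ k * ‖f x‖)) :=
      (f.integrable_pow_mul volume k).const_mul _
    refine hint.mono' ?_ ?_
    · exact (f.continuous.mul (Complex.continuous_ofReal.comp
        ((Polynomial.monomial k a).continuous_aeval.comp
          (continuous_id.inner continuous_const)))).aestronglyMeasurable
    · filter_upwards with x
      have h1 : |(inner ℝ x u : ℝ)| ≤ ‖x‖ := by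
        calc |(inner ℝ x u : ℝ)| ≤ ‖x‖ * ‖u‖ := abs_real_inner_le_norm x u
        _ = ‖x‖ := by rw [hu, mul_one]
      rw [norm_mul, Complex.norm_real, Real.norm_eq_abs, Polynomial.eval_monomial, abs_mul,
        abs_pow]
      have h2 : |(inner ℝ x u : ℝ)| ^ k ≤ ‖x‖ ^ k := pow_le_pow_left₀ (abs_nonneg _) h1 k
      calc ‖f x‖ * (|a| * |(inner ℝ x u : ℝ)| ^ k)
          = |a| * (|(inner ℝ x u : ℝ)| ^ k * ‖f x‖) := by ring
        _ ≤ |a| * (‖x‖ ^ k * ‖f x‖) := by gcongr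

lemma moment_zero {n : ℕ} (f : SchwartzMap (EuclideanSpace ℝ (Fin n)) ℂ)
    (hf : ∀ p : MvPolynomial (Fin n) ℝ,
      ∫ x : EuclideanSpace ℝ (Fin n), f x * (MvPolynomial.eval (fun i => x i) p : ℂ) = 0)
    (u : EuclideanSpace ℝ (Fin n)) (q : Polynomial ℝ) :
    ∫ x : EuclideanSpace ℝ (Fin n), f x * ((q.eval (inner ℝ x u : ℝ) : ℝ) : ℂ) = 0 := by
  have key := hf (Polynomial.aeval (∑ i, MvPolynomial.C (u i) * MvPolynomial.X i) q)
  rw [← key]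
  congr 1
  funext x
  congr 2
  have hcoe : (MvPolynomial.eval fun i => x i)
      = ⇑(MvPolynomial.aeval (R := ℝ) fun i : Fin n => x i) := by
    rw [← MvPolynomial.coe_aeval_eq_eval]; rfl
  rw [hcoe, ← Polynomial.aeval_algHom_apply]
  rw [map_sum]
  simp only [map_mul, MvPolynomial.aeval_C, MvPolynomial.aeval_X, Algebra.algebraMap_self,
    RingHom.id_apply]
  have hin : (inner ℝ x u : ℝ) = ∑ i, u i * x i := by
    rw [PiLp.inner_apply]
    exact Finset.sum_congr rfl fun i _ => by simp [mul_comm, RCLike.inner_apply]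
  rw [Polynomial.aeval_def, hin, Polynomial.eval₂_eq_eval_map, Algebra.algebraMap_self,
    Polynomial.map_id]

/-- If all polynomial moments of a Schwartz function `f` on `ℝⁿ` vanish, then for every
unit vector `u`, all one-dimensional polynomial moments of `s ↦ f̂(u,s)` vanish. -/
theorem radon_moments_vanish {n : ℕ} (f : SchwartzMap (EuclideanSpace ℝ (Fin n)) ℂ)
    (hf : ∀ p : MvPolynomial (Fin n) ℝ,
      ∫ x : EuclideanSpace ℝ (Fin n), f x * (MvPolynomial.eval (fun i => x i) p : ℂ) = 0)
    (u : EuclideanSpace ℝ (Fin n)) (hu : ‖u‖ = 1) (q : Polynomial ℝ) :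
    ∫ s : ℝ, radonTransform (fun x => f x) u s * ((q.eval s : ℝ) : ℂ) = 0 := by
  have hn : n ≠ 0 := by
    rintro rfl
    have h0 : u = 0 := Subsingleton.elim u 0
    rw [h0, norm_zero] at hu
    norm_num at hu
  obtain ⟨m, rfl⟩ := Nat.exists_eq_succ_of_ne_zero hn
  set K := ((ℝ ∙ u)ᗮ : Submodule ℝ (EuclideanSpace ℝ (Fin (m+1)))) with hK
  obtain ⟨Φ, hΦ, hΦeq⟩ := exists_mp u hu
  set g : EuclideanSpace ℝ (Fin (m+1)) → ℂ :=
    fun x => f x * ((q.eval (inner ℝ x u : ℝ) : ℝ) : ℂ) with hg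
  have hint : Integrable g := integrable_aux f u hu q
  have h0 : ∫ x, g x = 0 := moment_zero f hf u q
  have hcomp : (∫ p : ℝ × K, g (Φ p)) = 0 := by
    rw [hΦ.integral_comp Φ.measurableEmbedding]; exact h0
  have hintc : Integrable (fun p : ℝ × K => g (Φ p)) volume :=
    (hΦ.integrable_comp_emb Φ.measurableEmbedding).mpr hint
  have hform : ∀ p : ℝ × K,
      g (Φ p) = f (p.1 • u + (p.2 : EuclideanSpace ℝ (Fin (m+1)))) * ((q.eval p.1 : ℝ) : ℂ) := by
    rintro ⟨s, v⟩
    rw [hΦeq ⟨s, v⟩]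
    simp only [hg]
    congr 3
    have hvu : (inner ℝ (v : EuclideanSpace ℝ (Fin (m+1))) u : ℝ) = 0 := by
      rw [real_inner_comm]
      exact v.2 u (Submodule.mem_span_singleton_self u)
    rw [inner_add_left, real_inner_smul_left, hvu, real_inner_self_eq_norm_sq, hu]
    ring
  rw [Measure.volume_eq_prod] at hcomp hintc
  rw [MeasureTheory.integral_prod _ hintc] at hcomp
  rw [← hcomp]
  congr 1
  funext s
  rw [radonTransform, ← integral_mul_const]
  congr 1
  funext v
  exact (hform ⟨s, v⟩).symm
end
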